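/- For every pattern τ in S₃, the number of permutations of length n avoiding τ equals the n-th Catalan number, binom(2n,n)/(n+1). -/

import Mathlib

/-- An occurrence of the pattern `τ` (of length `k`) in the permutation `π` (of length `n`)
is a strictly increasing map of positions along which `π` is order-isomorphic to `τ`. -/
def IsOcc {k n : ℕ} (τ : Fin k → Fin k) (π : Fin n → Fin n) (f : Fin k → Fin n) : Prop :=
  StrictMono f ∧ ∀ i j : Fin k, τ i < τ j ↔ π (f i) < π (f j)

/-- `π` avoids the pattern `τ`. -/
def Avoids {k n : ℕ} (τ : Fin k → Fin k) (π : Fin n → Fin n) : Prop :=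
  ¬ ∃ f, IsOcc τ π f

/-- `π` contains exactly one occurrence of the pattern `τ`. -/
def ContainsOnce {k n : ℕ} (τ : Fin k → Fin k) (π : Fin n → Fin n) : Prop :=
  ∃! f, IsOcc τ π f

def p123 : Fin 3 → Fin 3 := ![0, 1, 2]
def p132 : Fin 3 → Fin 3 := ![0, 2, 1]
def p213 : Fin 3 → Fin 3 := ![1, 0, 2]
def p231 : Fin 3 → Fin 3 := ![1, 2, 0]
def p312 : Fin 3 → Fin 3 := ![2, 0, 1]
def p321 : Fin 3 → Fin 3 := ![2, 1, 0]
namespace PatCat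
open List Finset Function

def Ctn (R : ℕ → ℕ → ℕ → Prop) (l : List ℕ) : Prop :=
  ∃ a b c, [a,b,c].Sublist l ∧ R a b c

def R132 (a b c : ℕ) : Prop := a < c ∧ c < b
def R123 (a b c : ℕ) : Prop := a < b ∧ b < c
def R213 (a b c : ℕ) : Prop := b < a ∧ a < c
def R231 (a b c : ℕ) : Prop := c < a ∧ a < b
def R312 (a b c : ℕ) : Prop := b < c ∧ c < a
def R321 (a b c : ℕ) : Prop := c < b ∧ b < a

def AP (R : ℕ → ℕ → ℕ → Prop) (n : ℕ) (l : List ℕ) : Prop :=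
  l.Nodup ∧ l.toFinset = Finset.range n ∧ ¬ Ctn R l

def B132 (t : List ℕ) (x : ℕ) : Prop := ∃ b, [b,x].Sublist t ∧ x < b
def B123 (t : List ℕ) (x : ℕ) : Prop := ∃ c, [x,c].Sublist t ∧ x < c

noncomputable def mSt (B : List ℕ → ℕ → Prop) (t : List ℕ) : ℕ :=
  sInf {k | ∀ x, B t x → x < k}

/-! ### sublist helpers -/

lemma pair_sublist_cons {b c k : ℕ} {t : List ℕ} :
    [b,c].Sublist (k::t) ↔ [b,c].Sublist t ∨ (b = k ∧ c ∈ t) := by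
  rw [List.sublist_cons_iff]
  constructor
  · rintro (h | ⟨r, hr, hrt⟩)
    · exact Or.inl h
    · cases hr
      exact Or.inr ⟨rfl, List.singleton_sublist.mp hrt⟩
  · rintro (h | ⟨rfl, hc⟩)
    · exact Or.inl h
    · exact Or.inr ⟨[c], rfl, List.singleton_sublist.mpr hc⟩

lemma triple_sublist_cons {a b c k : ℕ} {t : List ℕ} :
    [a,b,c].Sublist (k::t) ↔ [a,b,c].Sublist t ∨ (a = k ∧ [b,c].Sublist t) := by
  rw [List.sublist_cons_iff]
  constructor
  · rintro (h | ⟨r, hr, hrt⟩)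
    · exact Or.inl h
    · cases hr
      exact Or.inr ⟨rfl, hrt⟩
  · rintro (h | ⟨rfl, hc⟩)
    · exact Or.inl h
    · exact Or.inr ⟨[b,c], rfl, hc⟩

lemma pair_sublist_map {p q : ℕ} {f : ℕ → ℕ} {t : List ℕ} :
    [p,q].Sublist (t.map f) ↔ ∃ p' q', [p',q'].Sublist t ∧ p = f p' ∧ q = f q' := by
  constructor
  · intro h
    obtain ⟨l', hl', hmap⟩ := List.sublist_map_iff.mp h
    match l', hmap with
    | [p', q'], hmap =>
      simp only [List.map_cons, List.map_nil, List.cons.injEq, and_true] at hmap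
      exact ⟨p', q', hl', hmap.1, hmap.2⟩
  · rintro ⟨p', q', h, rfl, rfl⟩
    simpa using h.map f

lemma triple_sublist_map {p q r : ℕ} {f : ℕ → ℕ} {t : List ℕ} :
    [p,q,r].Sublist (t.map f) ↔
      ∃ p' q' r', [p',q',r'].Sublist t ∧ p = f p' ∧ q = f q' ∧ r = f r' := by
  constructor
  · intro h
    obtain ⟨l', hl', hmap⟩ := List.sublist_map_iff.mp h
    match l', hmap with
    | [p', q', r'], hmap =>
      simp only [List.map_cons, List.map_nil, List.cons.injEq, and_true] at hmap
      exact ⟨p', q', r', hl', hmap.1, hmap.2.1, hmap.2.2⟩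
  · rintro ⟨p', q', r', h, rfl, rfl, rfl⟩
    simpa using h.map f

/-! ### cons characterizations of containment -/

lemma Ctn_cons_132 {k : ℕ} {t : List ℕ} :
    Ctn R132 (k::t) ↔ Ctn R132 t ∨ ∃ x, B132 t x ∧ k < x := by
  constructor
  · rintro ⟨a, b, c, hs, hR⟩
    rcases triple_sublist_cons.mp hs with h | ⟨rfl, h⟩
    · exact Or.inl ⟨a, b, c, h, hR⟩
    · exact Or.inr ⟨c, ⟨b, h, hR.2⟩, hR.1⟩
  · rintro (⟨a, b, c, hs, hR⟩ | ⟨x, ⟨b, hs, hxb⟩, hkx⟩)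
    · exact ⟨a, b, c, triple_sublist_cons.mpr (Or.inl hs), hR⟩
    · exact ⟨k, b, x, triple_sublist_cons.mpr (Or.inr ⟨rfl, hs⟩), hkx, hxb⟩

lemma Ctn_cons_123 {k : ℕ} {t : List ℕ} :
    Ctn R123 (k::t) ↔ Ctn R123 t ∨ ∃ x, B123 t x ∧ k < x := by
  constructor
  · rintro ⟨a, b, c, hs, hR⟩
    rcases triple_sublist_cons.mp hs with h | ⟨rfl, h⟩
    · exact Or.inl ⟨a, b, c, h, hR⟩
    · exact Or.inr ⟨b, ⟨c, h, hR.2⟩, hR.1⟩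
  · rintro (⟨a, b, c, hs, hR⟩ | ⟨x, ⟨c, hs, hxc⟩, hkx⟩)
    · exact ⟨a, b, c, triple_sublist_cons.mpr (Or.inl hs), hR⟩
    · exact ⟨k, x, c, triple_sublist_cons.mpr (Or.inr ⟨rfl, hs⟩), hkx, hxc⟩

/-! ### bottoms membership -/

lemma B132_mem {t : List ℕ} {x : ℕ} (h : B132 t x) : x ∈ t ∧ ∃ b ∈ t, x < b := by
  obtain ⟨b, hs, hx⟩ := h
  exact ⟨hs.mem (by simp), b, hs.mem (by simp), hx⟩

lemma B123_mem {t : List ℕ} {x : ℕ} (h : B123 t x) : x ∈ t ∧ ∃ b ∈ t, x < b := by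
  obtain ⟨c, hs, hx⟩ := h
  exact ⟨hs.mem (by simp), c, hs.mem (by simp), hx⟩

/-! ### mSt lemmas -/

lemma mSt_le {B : List ℕ → ℕ → Prop} {t : List ℕ} {N : ℕ}
    (h : ∀ x, B t x → x < N) : mSt B t ≤ N :=
  Nat.sInf_le h

lemma mSt_spec {B : List ℕ → ℕ → Prop} {t : List ℕ} {N : ℕ}
    (h : ∀ x, B t x → x < N) : ∀ x, B t x → x < mSt B t :=
  Nat.sInf_mem (s := {k | ∀ x, B t x → x < k}) ⟨N, h⟩

lemma mSt_le_iff {B : List ℕ → ℕ → Prop} {t : List ℕ} {N k : ℕ}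
    (h : ∀ x, B t x → x < N) : mSt B t ≤ k ↔ ∀ x, B t x → x < k :=
  ⟨fun hk x hx => lt_of_lt_of_le (mSt_spec h x hx) hk, mSt_le⟩

lemma mSt_eq {B : List ℕ → ℕ → Prop} {t : List ℕ} {k : ℕ}
    (hmem : ∀ x, B t x → x < k)
    (hbot : ∀ k', (∀ x, B t x → x < k') → k ≤ k') : mSt B t = k :=
  le_antisymm (mSt_le hmem) (hbot _ (mSt_spec hmem))

lemma mSt_nil (B : List ℕ → ℕ → Prop) (hB : ∀ x, ¬ B [] x) : mSt B [] = 0 := by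
  apply Nat.sInf_eq_zero.mpr
  exact Or.inl (fun x hx => absurd hx (hB x))

lemma B132_nil (x : ℕ) : ¬ B132 [] x := by
  rintro ⟨b, hs, -⟩
  simpa using List.sublist_nil.mp hs

lemma B123_nil (x : ℕ) : ¬ B123 [] x := by
  rintro ⟨c, hs, -⟩
  simpa using List.sublist_nil.mp hs

/-! ### collapse and uncollapse -/

def unc (k x : ℕ) : ℕ := if x < k then x else x + 1
def clp (k x : ℕ) : ℕ := if x < k then x else x - 1

lemma unc_strictMono (k : ℕ) : StrictMono (unc k) := by
  intro a b hab
  unfold unc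
  split_ifs <;> omega

lemma unc_lt_iff {k x y : ℕ} : unc k x < unc k y ↔ x < y :=
  (unc_strictMono k).lt_iff_lt

lemma unc_ne (k x : ℕ) : unc k x ≠ k := by unfold unc; split_ifs <;> omega

lemma clp_unc (k x : ℕ) : clp k (unc k x) = x := by
  unfold unc clp; split_ifs <;> omega

lemma unc_clp {k x : ℕ} (h : x ≠ k) : unc k (clp k x) = x := by
  unfold unc clp; split_ifs <;> omega

lemma unc_lt_k {k x : ℕ} : unc k x < k ↔ x < k := by unfold unc; split_ifs <;> omega

lemma clp_lt_iff {k x y : ℕ} (hx : x ≠ k) (hy : y ≠ k) : clp k x < clp k y ↔ x < y := by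
  unfold clp; split_ifs <;> omega


/-! ### transfer of containment along order-preserving maps -/

lemma Ctn_map_iff {R : ℕ → ℕ → ℕ → Prop} {f : ℕ → ℕ} {l : List ℕ}
    (hf : ∀ a b c, [a,b,c].Sublist l → (R (f a) (f b) (f c) ↔ R a b c)) :
    Ctn R (l.map f) ↔ Ctn R l := by
  constructor
  · rintro ⟨a, b, c, hs, hR⟩
    obtain ⟨a', b', c', hs', rfl, rfl, rfl⟩ := triple_sublist_map.mp hs
    exact ⟨a', b', c', hs', (hf _ _ _ hs').mp hR⟩
  · rintro ⟨a, b, c, hs, hR⟩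
    exact ⟨f a, f b, f c, by simpa using hs.map f, (hf _ _ _ hs).mpr hR⟩

lemma Ctn_132_map_unc {k : ℕ} {l : List ℕ} :
    Ctn R132 (l.map (unc k)) ↔ Ctn R132 l :=
  Ctn_map_iff (fun a b c _ => by unfold R132; rw [unc_lt_iff, unc_lt_iff])

lemma Ctn_123_map_unc {k : ℕ} {l : List ℕ} :
    Ctn R123 (l.map (unc k)) ↔ Ctn R123 l :=
  Ctn_map_iff (fun a b c _ => by unfold R123; rw [unc_lt_iff, unc_lt_iff])

/-! ### bottoms under map -/

lemma B132_map_unc {k y : ℕ} {t : List ℕ} :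
    B132 (t.map (unc k)) y ↔ ∃ x, B132 t x ∧ y = unc k x := by
  constructor
  · rintro ⟨b, hs, hy⟩
    obtain ⟨b', x', hs', rfl, rfl⟩ := pair_sublist_map.mp hs
    exact ⟨x', ⟨b', hs', unc_lt_iff.mp hy⟩, rfl⟩
  · rintro ⟨x, ⟨b, hs, hx⟩, rfl⟩
    exact ⟨unc k b, by simpa using hs.map (unc k), unc_lt_iff.mpr hx⟩

lemma B123_map_unc {k y : ℕ} {t : List ℕ} :
    B123 (t.map (unc k)) y ↔ ∃ x, B123 t x ∧ y = unc k x := by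
  constructor
  · rintro ⟨c, hs, hy⟩
    obtain ⟨x', c', hs', rfl, rfl⟩ := pair_sublist_map.mp hs
    exact ⟨x', ⟨c', hs', unc_lt_iff.mp hy⟩, rfl⟩
  · rintro ⟨x, ⟨c, hs, hx⟩, rfl⟩
    exact ⟨unc k c, by simpa using hs.map (unc k), unc_lt_iff.mpr hx⟩

/-! ### bottoms of a cons -/

lemma B132_cons {k y : ℕ} {t : List ℕ} :
    B132 (k::t) y ↔ B132 t y ∨ (y ∈ t ∧ y < k) := by
  constructor
  · rintro ⟨b, hs, hy⟩
    rcases pair_sublist_cons.mp hs with h | ⟨rfl, h⟩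
    · exact Or.inl ⟨b, h, hy⟩
    · exact Or.inr ⟨h, hy⟩
  · rintro (⟨b, hs, hy⟩ | ⟨hmem, hy⟩)
    · exact ⟨b, pair_sublist_cons.mpr (Or.inl hs), hy⟩
    · exact ⟨k, pair_sublist_cons.mpr (Or.inr ⟨rfl, hmem⟩), hy⟩

lemma B123_cons {k y : ℕ} {t : List ℕ} :
    B123 (k::t) y ↔ B123 t y ∨ (y = k ∧ ∃ c ∈ t, k < c) := by
  constructor
  · rintro ⟨c, hs, hy⟩
    rcases pair_sublist_cons.mp hs with h | ⟨rfl, h⟩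
    · exact Or.inl ⟨c, h, hy⟩
    · exact Or.inr ⟨rfl, c, h, hy⟩
  · rintro (⟨c, hs, hy⟩ | ⟨rfl, c, hmem, hy⟩)
    · exact ⟨c, pair_sublist_cons.mpr (Or.inl hs), hy⟩
    · exact ⟨c, pair_sublist_cons.mpr (Or.inr ⟨rfl, hmem⟩), hy⟩

/-! ### child statistics -/

lemma m132_cons {k : ℕ} {t : List ℕ}
    (h1 : ∀ x, B132 t x → x < k) (h2 : ∀ x, x < k → x ∈ t) :
    mSt B132 (k::t) = k := by
  have hbots : ∀ y, B132 (k::t) y ↔ y < k := by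
    intro y
    rw [B132_cons]
    constructor
    · rintro (h | ⟨-, h⟩)
      · exact h1 _ h
      · exact h
    · intro h
      exact Or.inr ⟨h2 _ h, h⟩
  apply mSt_eq
  · intro x hx; exact (hbots x).mp hx
  · intro k' hk'
    by_contra hlt
    push_neg at hlt
    exact absurd (hk' k' ((hbots k').mpr hlt)) (lt_irrefl k')

lemma m123_cons_lt {k : ℕ} {t : List ℕ}
    (h1 : ∀ x, B123 t x → x < k) (h2 : ∃ c ∈ t, k < c) :
    mSt B123 (k::t) = k + 1 := by
  have hbots : ∀ y, B123 (k::t) y ↔ (B123 t y ∨ y = k) := by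
    intro y
    rw [B123_cons]
    constructor
    · rintro (h | ⟨rfl, -⟩)
      · exact Or.inl h
      · exact Or.inr rfl
    · rintro (h | rfl)
      · exact Or.inl h
      · exact Or.inr ⟨rfl, h2⟩
  apply mSt_eq
  · intro x hx
    rcases (hbots x).mp hx with h | rfl
    · exact lt_trans (h1 _ h) (Nat.lt_succ_self k)
    · exact Nat.lt_succ_self _
  · intro k' hk'
    have := hk' k ((hbots k).mpr (Or.inr rfl))
    omega

lemma m123_cons_top {k : ℕ} {t : List ℕ} (h : ∀ c ∈ t, c < k) :
    mSt B123 (k::t) = mSt B123 t := by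
  unfold mSt
  congr 1
  ext k'
  simp only [Set.mem_setOf_eq]
  constructor
  · intro hh x hx
    exact hh x (B123_cons.mpr (Or.inl hx))
  · intro hh x hx
    rcases B123_cons.mp hx with h' | ⟨rfl, c, hc, hkc⟩
    · exact hh x h'
    · exact absurd (h c hc) (not_lt.mpr hkc.le)

/-! ### AP cons characterization -/

lemma AP_cons_nodup_toFinset {n k : ℕ} {t : List ℕ} :
    ((k::t).Nodup ∧ (k::t).toFinset = Finset.range (n+1)) ↔
      (k ≤ n ∧ t.Nodup ∧ t.toFinset = (Finset.range (n+1)).erase k) := by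
  rw [List.nodup_cons, List.toFinset_cons]
  constructor
  · rintro ⟨⟨hk, hnd⟩, hins⟩
    have hkmem : k ∈ Finset.range (n+1) := hins ▸ Finset.mem_insert_self k t.toFinset
    refine ⟨by simpa using Nat.lt_succ_iff.mp (Finset.mem_range.mp hkmem), hnd, ?_⟩
    rw [← hins, Finset.erase_insert (by simpa using hk)]
  · rintro ⟨hk, hnd, hts⟩
    have hkmem : k ∈ Finset.range (n+1) := Finset.mem_range.mpr (Nat.lt_succ_iff.mpr hk)
    refine ⟨⟨?_, hnd⟩, by rw [hts, Finset.insert_erase hkmem]⟩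
    intro hmem
    have : k ∈ t.toFinset := List.mem_toFinset.mpr hmem
    rw [hts] at this
    exact absurd this (Finset.notMem_erase k _)

/-! ### toFinset computations for unc/clp images -/

lemma toFinset_map_unc {n k : ℕ} {t : List ℕ} (hk : k ≤ n)
    (ht : t.toFinset = Finset.range n) :
    (t.map (unc k)).toFinset = (Finset.range (n+1)).erase k := by
  ext y
  simp only [List.mem_toFinset, List.mem_map, Finset.mem_erase, Finset.mem_range]
  constructor
  · rintro ⟨x, hx, rfl⟩
    have : x ∈ Finset.range n := ht ▸ List.mem_toFinset.mpr hx
    have hxn : x < n := Finset.mem_range.mp this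
    exact ⟨unc_ne k x, by unfold unc; split_ifs <;> omega⟩
  · rintro ⟨hne, hlt⟩
    refine ⟨clp k y, ?_, unc_clp hne⟩
    have : clp k y ∈ Finset.range n := by
      rw [Finset.mem_range]; unfold clp; split_ifs <;> omega
    exact List.mem_toFinset.mp (ht ▸ this)

lemma toFinset_map_clp {n k : ℕ} {t : List ℕ} (hk : k ≤ n)
    (ht : t.toFinset = (Finset.range (n+1)).erase k) :
    (t.map (clp k)).toFinset = Finset.range n := by
  have hmem : ∀ x ∈ t, x ≠ k ∧ x < n + 1 := by
    intro x hx
    have : x ∈ (Finset.range (n+1)).erase k := ht ▸ List.mem_toFinset.mpr hx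
    simpa [Finset.mem_erase] using this
  ext y
  simp only [List.mem_toFinset, List.mem_map, Finset.mem_range]
  constructor
  · rintro ⟨x, hx, rfl⟩
    obtain ⟨hne, hlt⟩ := hmem x hx
    unfold clp; split_ifs <;> omega
  · intro hy
    refine ⟨unc k y, ?_, clp_unc k y⟩
    have : unc k y ∈ (Finset.range (n+1)).erase k := by
      simp only [Finset.mem_erase, Finset.mem_range]
      exact ⟨unc_ne k y, by unfold unc; split_ifs <;> omega⟩
    exact List.mem_toFinset.mp (ht ▸ this)

lemma nodup_map_unc {k : ℕ} {t : List ℕ} (h : t.Nodup) : (t.map (unc k)).Nodup :=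
  h.map ((unc_strictMono k).injective)

lemma nodup_map_clp {k : ℕ} {t : List ℕ} (h : t.Nodup) (hmem : ∀ x ∈ t, x ≠ k) :
    (t.map (clp k)).Nodup := by
  apply h.map_on
  intro x hx y hy hxy
  have h1 := hmem x hx
  have h2 := hmem y hy
  revert hxy; unfold clp; split_ifs <;> omega

lemma map_clp_map_unc {k : ℕ} (t : List ℕ) : (t.map (unc k)).map (clp k) = t := by
  rw [List.map_map]
  have : ∀ a ∈ t, (clp k ∘ unc k) a = id a := fun a _ => clp_unc k a
  rw [List.map_congr_left this, List.map_id]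

lemma map_unc_map_clp {k : ℕ} {t : List ℕ} (hmem : ∀ x ∈ t, x ≠ k) :
    (t.map (clp k)).map (unc k) = t := by
  rw [List.map_map]
  have : ∀ a ∈ t, (unc k ∘ clp k) a = id a := fun a ha => unc_clp (hmem a ha)
  rw [List.map_congr_left this, List.map_id]


/-! ### finiteness -/

lemma finite_aux (n : ℕ) : {l : List ℕ | l.Nodup ∧ l.toFinset = Finset.range n}.Finite := by
  have hsub : {l : List ℕ | l.Nodup ∧ l.toFinset = Finset.range n} ⊆
      (fun l : List (Fin n) => l.map Fin.val) '' {l | l.length ≤ n} := by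
    rintro l ⟨hnd, hts⟩
    have hlen : l.length = n := by
      have := List.toFinset_card_of_nodup hnd
      rw [hts, Finset.card_range] at this; omega
    have hbound : ∀ x ∈ l, x < n := fun x hx =>
      Finset.mem_range.mp (hts ▸ List.mem_toFinset.mpr hx)
    refine ⟨l.pmap (fun x h => (⟨x, h⟩ : Fin n)) hbound, ?_, ?_⟩
    · simp only [Set.mem_setOf_eq, List.length_pmap]; omega
    · show (l.pmap (fun x h => (⟨x, h⟩ : Fin n)) hbound).map Fin.val = l
      rw [List.map_pmap]
      simp
  exact ((List.finite_length_le (Fin n) n).image _).subset hsub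

lemma finite_pred {n : ℕ} (P : List ℕ → Prop)
    (hP : ∀ l, P l → l.Nodup ∧ l.toFinset = Finset.range n) :
    Finite {l : List ℕ // P l} :=
  Set.Finite.to_subtype ((finite_aux n).subset (fun l hl => hP l hl))

/-! ### counting definitions -/

noncomputable def Fc (R : ℕ → ℕ → ℕ → Prop) (B : List ℕ → ℕ → Prop) (n j : ℕ) : ℕ :=
  Nat.card {l : List ℕ // AP R n l ∧ mSt B l = j}

noncomputable def Nc (R : ℕ → ℕ → ℕ → Prop) (n : ℕ) : ℕ :=
  Nat.card {l : List ℕ // AP R n l}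

lemma card_fiber_sum {X : Type} [Finite X] (f : X → ℕ) (N : ℕ) (hf : ∀ x, f x ≤ N) :
    Nat.card X = ∑ j ∈ Finset.range (N+1), Nat.card {x : X // f x = j} := by
  classical
  cases nonempty_fintype X
  rw [Nat.card_eq_fintype_card, ← Finset.card_univ,
    Finset.card_eq_sum_card_fiberwise (f := f) (t := Finset.range (N+1))
      (fun x _ => Finset.mem_range.mpr (Nat.lt_succ_of_le (hf x)))]
  refine Finset.sum_congr rfl fun j _ => ?_
  rw [Nat.card_eq_fintype_card, Fintype.card_subtype]

lemma card_split {n : ℕ} (P : List ℕ → Prop) (m : List ℕ → ℕ) (N : ℕ)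
    (hP : ∀ l, P l → l.Nodup ∧ l.toFinset = Finset.range n)
    (hb : ∀ l, P l → m l ≤ N) :
    Nat.card {l : List ℕ // P l} =
      ∑ j ∈ Finset.range (N+1), Nat.card {l : List ℕ // P l ∧ m l = j} := by
  have : Finite {l : List ℕ // P l} := finite_pred P hP
  rw [card_fiber_sum (fun x : {l // P l} => m x.val) N (fun x => hb _ x.2)]
  refine Finset.sum_congr rfl fun j _ => Nat.card_congr ?_
  exact Equiv.subtypeSubtypeEquivSubtypeInter P (fun l => m l = j)

/-! ### bounds on the statistic -/

lemma B132_lt {n : ℕ} {l : List ℕ} (hts : l.toFinset = Finset.range n) :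
    ∀ x, B132 l x → x + 1 < n := by
  intro x hx
  obtain ⟨hxl, b, hbl, hxb⟩ := B132_mem hx
  have : b < n := Finset.mem_range.mp (hts ▸ List.mem_toFinset.mpr hbl)
  omega

lemma B123_lt {n : ℕ} {l : List ℕ} (hts : l.toFinset = Finset.range n) :
    ∀ x, B123 l x → x + 1 < n := by
  intro x hx
  obtain ⟨hxl, b, hbl, hxb⟩ := B123_mem hx
  have : b < n := Finset.mem_range.mp (hts ▸ List.mem_toFinset.mpr hbl)
  omega

lemma mSt132_le {n : ℕ} {l : List ℕ} (hts : l.toFinset = Finset.range n) :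
    mSt B132 l ≤ n := mSt_le (fun x hx => by have := B132_lt hts x hx; omega)

lemma mSt123_le {n : ℕ} {l : List ℕ} (hts : l.toFinset = Finset.range n) :
    mSt B123 l ≤ n := mSt_le (fun x hx => by have := B123_lt hts x hx; omega)

lemma mSt132_le' {n : ℕ} {l : List ℕ} (hts : l.toFinset = Finset.range (n+1)) :
    mSt B132 l ≤ n := mSt_le (fun x hx => by have := B132_lt hts x hx; omega)

lemma mSt123_le' {n : ℕ} {l : List ℕ} (hts : l.toFinset = Finset.range (n+1)) :
    mSt B123 l ≤ n := mSt_le (fun x hx => by have := B123_lt hts x hx; omega)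


/-! ### the 132 recurrence bijection -/

lemma Fc132_rec {n j : ℕ} (hj : j ≤ n) :
    Fc R132 B132 (n+1) j = Nat.card {t : List ℕ // AP R132 n t ∧ mSt B132 t ≤ j} := by
  apply Nat.card_congr
  apply Equiv.symm
  have hBnd : ∀ (t : List ℕ), t.toFinset = Finset.range n → ∀ x, B132 t x → x < n + 1 :=
    fun t hts x hx => by have := B132_lt hts x hx; omega
  refine Equiv.ofBijective
    (fun t => ⟨j :: t.val.map (unc j), ?_, ?_⟩) ⟨?_, ?_⟩
  · -- AP R132 (n+1) (j :: map (unc j) t)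
    obtain ⟨t, ⟨hnd, hts, hav⟩, hm⟩ := t
    have hbots : ∀ x, B132 t x → x < j := (mSt_le_iff (hBnd t hts)).mp hm
    have h12 := AP_cons_nodup_toFinset.mpr ⟨hj, nodup_map_unc hnd, toFinset_map_unc hj hts⟩
    refine ⟨h12.1, h12.2, ?_⟩
    rw [Ctn_cons_132]
    rintro (h | ⟨y, hy, hjy⟩)
    · exact hav (Ctn_132_map_unc.mp h)
    · obtain ⟨x, hx, rfl⟩ := B132_map_unc.mp hy
      have hxj : x < j := hbots x hx
      have : unc j x = x := by unfold unc; split_ifs <;> omega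
      omega
  · -- mSt = j
    obtain ⟨t, ⟨hnd, hts, hav⟩, hm⟩ := t
    have hbots : ∀ x, B132 t x → x < j := (mSt_le_iff (hBnd t hts)).mp hm
    apply m132_cons
    · intro y hy
      obtain ⟨x, hx, rfl⟩ := B132_map_unc.mp hy
      have hxj : x < j := hbots x hx
      unfold unc; split_ifs <;> omega
    · intro x hx
      have hxt : x ∈ t := by
        rw [← List.mem_toFinset, hts, Finset.mem_range]; omega
      refine List.mem_map.mpr ⟨x, hxt, ?_⟩
      unfold unc; split_ifs <;> omega
  · -- injective
    rintro ⟨t, ht⟩ ⟨t', ht'⟩ h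
    simp only [Subtype.mk.injEq, List.cons.injEq, true_and] at h
    exact Subtype.ext ((List.map_injective_iff.mpr (unc_strictMono j).injective) h)
  · -- surjective
    rintro ⟨l, ⟨hnd, hts, hav⟩, hm⟩
    cases l with
    | nil => exfalso; simp at hts; exact absurd hts.symm (Finset.nonempty_range_add_one.ne_empty)
    | cons k t₀ =>
      obtain ⟨hk, hnd₀, hts₀⟩ := AP_cons_nodup_toFinset.mp ⟨hnd, hts⟩
      have hknott : k ∉ t₀ := (List.nodup_cons.mp hnd).1
      have hmemne : ∀ x ∈ t₀, x ≠ k := by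
        intro x hx
        have : x ∈ (Finset.range (n+1)).erase k := hts₀ ▸ List.mem_toFinset.mpr hx
        exact (Finset.mem_erase.mp this).1
      rw [Ctn_cons_132] at hav
      push_neg at hav
      obtain ⟨hav₀, hval⟩ := hav
      have hvalid : ∀ x, B132 t₀ x → x < k := by
        intro x hx
        have h1 := hval x hx
        have h2 := hmemne x (B132_mem hx).1
        omega
      have hmk : mSt B132 (k :: t₀) = k := by
        apply m132_cons hvalid
        intro x hx
        rw [← List.mem_toFinset, hts₀, Finset.mem_erase, Finset.mem_range]
        omega
      have hkj : k = j := by rw [hmk] at hm; exact hm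
      subst hkj
      -- candidate preimage
      have hndc : (t₀.map (clp k)).Nodup := nodup_map_clp hnd₀ hmemne
      have htsc : (t₀.map (clp k)).toFinset = Finset.range n := toFinset_map_clp hk hts₀
      have havc : ¬ Ctn R132 (t₀.map (clp k)) := by
        intro h
        apply hav₀
        rw [← Ctn_map_iff (f := clp k) (l := t₀) ?_]
        · exact h
        · intro a b c hs
          have ha := hmemne a (hs.mem (by simp))
          have hb := hmemne b (hs.mem (by simp))
          have hc := hmemne c (hs.mem (by simp))
          unfold R132
          rw [clp_lt_iff ha hc, clp_lt_iff hc hb]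
      have hmc : mSt B132 (t₀.map (clp k)) ≤ k := by
        apply mSt_le
        intro y hy
        obtain ⟨b, hs, hyb⟩ := hy
        obtain ⟨b', x', hs', rfl, rfl⟩ := pair_sublist_map.mp hs
        have hb' := hmemne b' (hs'.mem (by simp))
        have hx' := hmemne x' (hs'.mem (by simp))
        have : x' < b' := (clp_lt_iff hx' hb').mp hyb
        have : x' < k := hvalid x' ⟨b', hs', this⟩
        unfold clp; split_ifs <;> omega
      refine ⟨⟨t₀.map (clp k), ⟨hndc, htsc, havc⟩, hmc⟩, ?_⟩
      apply Subtype.ext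
      show k :: (t₀.map (clp k)).map (unc k) = k :: t₀
      rw [map_unc_map_clp hmemne]

lemma Fc132_zero {n j : ℕ} (hj : n < j) : Fc R132 B132 (n+1) j = 0 := by
  unfold Fc
  rw [Nat.card_eq_zero]
  left
  constructor
  rintro ⟨l, ⟨hnd, hts, hav⟩, hm⟩
  have := mSt132_le' hts
  omega

/-! ### the 123 recurrence bijection -/

lemma Fc123_zero {n j : ℕ} (hj : n < j) : Fc R123 B123 (n+1) j = 0 := by
  unfold Fc
  rw [Nat.card_eq_zero]
  left
  constructor
  rintro ⟨l, ⟨hnd, hts, hav⟩, hm⟩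
  have := mSt123_le' hts
  omega


lemma aux123_inl {n k : ℕ} (hk : k < n) {t : List ℕ} (h : AP R123 n t)
    (hm : mSt B123 t ≤ k) :
    AP R123 (n+1) (k :: t.map (unc k)) ∧ mSt B123 (k :: t.map (unc k)) = k + 1 := by
  obtain ⟨hnd, hts, hav⟩ := h
  have hBnd : ∀ x, B123 t x → x < n + 1 := fun x hx => by have := B123_lt hts x hx; omega
  have hbots : ∀ x, B123 t x → x < k := (mSt_le_iff hBnd).mp hm
  have hk' : k ≤ n := le_of_lt hk
  have h12 := AP_cons_nodup_toFinset.mpr ⟨hk', nodup_map_unc hnd, toFinset_map_unc hk' hts⟩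
  have hbotsmap : ∀ y, B123 (t.map (unc k)) y → y < k := by
    intro y hy
    obtain ⟨x, hx, rfl⟩ := B123_map_unc.mp hy
    have := hbots x hx
    unfold unc; split_ifs <;> omega
  constructor
  · refine ⟨h12.1, h12.2, ?_⟩
    rw [Ctn_cons_123]
    rintro (hctn | ⟨y, hy, hky⟩)
    · exact hav (Ctn_123_map_unc.mp hctn)
    · have := hbotsmap y hy; omega
  · apply m123_cons_lt hbotsmap
    refine ⟨n, ?_, hk⟩
    rw [← List.mem_toFinset, toFinset_map_unc hk' hts, Finset.mem_erase, Finset.mem_range]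
    omega

lemma aux123_inr {n : ℕ} {t : List ℕ} (h : AP R123 n t) :
    AP R123 (n+1) (n :: t) ∧ mSt B123 (n :: t) = mSt B123 t := by
  obtain ⟨hnd, hts, hav⟩ := h
  have hlt : ∀ c ∈ t, c < n := fun c hc =>
    Finset.mem_range.mp (hts ▸ List.mem_toFinset.mpr hc)
  constructor
  · refine ⟨List.nodup_cons.mpr ⟨fun hmem => absurd (hlt n hmem) (lt_irrefl n), hnd⟩, ?_, ?_⟩
    · rw [List.toFinset_cons, hts, Finset.range_add_one]
    · rw [Ctn_cons_123]
      rintro (hctn | ⟨y, hy, hny⟩)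
      · exact hav hctn
      · have := hlt y (B123_mem hy).1; omega
  · exact m123_cons_top hlt

lemma Fc123_rec_pos {n j : ℕ} (hj1 : 1 ≤ j) (hjn : j ≤ n) :
    Fc R123 B123 (n+1) j =
      Nat.card {t : List ℕ // AP R123 n t ∧ mSt B123 t ≤ j - 1} + Fc R123 B123 n j := by
  have fin1 : Finite {t : List ℕ // AP R123 n t ∧ mSt B123 t ≤ j - 1} :=
    finite_pred _ (fun l h => ⟨h.1.1, h.1.2.1⟩)
  have fin2 : Finite {t : List ℕ // AP R123 n t ∧ mSt B123 t = j} :=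
    finite_pred _ (fun l h => ⟨h.1.1, h.1.2.1⟩)
  unfold Fc
  rw [← Nat.card_sum]
  apply Nat.card_congr
  apply Equiv.symm
  have hk : j - 1 < n := by omega
  refine Equiv.ofBijective (fun x => Sum.rec
    (fun t => ⟨(j-1) :: t.val.map (unc (j-1)),
      (aux123_inl hk t.prop.1 t.prop.2).1,
      by rw [(aux123_inl hk t.prop.1 t.prop.2).2]; omega⟩)
    (fun t => ⟨n :: t.val, (aux123_inr t.prop.1).1,
      by rw [(aux123_inr t.prop.1).2]; exact t.prop.2⟩) x) ⟨?_, ?_⟩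
  · -- injective
    rintro (⟨t, ht⟩ | ⟨t, ht⟩) (⟨t', ht'⟩ | ⟨t', ht'⟩) h <;>
      simp only [Subtype.mk.injEq, List.cons.injEq] at h
    · congr 1
      exact Subtype.ext ((List.map_injective_iff.mpr (unc_strictMono (j-1)).injective) h.2)
    · omega
    · omega
    · congr 1
      exact Subtype.ext h.2
  · -- surjective
    rintro ⟨l, ⟨hnd, hts, hav⟩, hm⟩
    cases l with
    | nil => exfalso; simp at hts; exact absurd hts.symm (Finset.nonempty_range_add_one.ne_empty)
    | cons k t₀ =>
      obtain ⟨hk', hnd₀, hts₀⟩ := AP_cons_nodup_toFinset.mp ⟨hnd, hts⟩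
      have hmemne : ∀ x ∈ t₀, x ≠ k := by
        intro x hx
        have : x ∈ (Finset.range (n+1)).erase k := hts₀ ▸ List.mem_toFinset.mpr hx
        exact (Finset.mem_erase.mp this).1
      rw [Ctn_cons_123] at hav
      push_neg at hav
      obtain ⟨hav₀, hval⟩ := hav
      have hvalid : ∀ x, B123 t₀ x → x < k := by
        intro x hx
        have h1 := hval x hx
        have h2 := hmemne x (B123_mem hx).1
        omega
      by_cases hkn : k = n
      · -- k = n : the inr case
        rw [hkn] at hts₀ hm
        have hts₀' : t₀.toFinset = Finset.range n := by
          rw [hts₀, Finset.range_add_one, Finset.erase_insert (by simp)]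
        have hAPt : AP R123 n t₀ := ⟨hnd₀, hts₀', hav₀⟩
        have hmt : mSt B123 t₀ = j := by
          rw [← (aux123_inr hAPt).2]; exact hm
        exact ⟨Sum.inr ⟨t₀, hAPt, hmt⟩, Subtype.ext (show n :: t₀ = k :: t₀ by rw [hkn])⟩
      · -- k < n : the inl case
        have hklt : k < n := by omega
        have hndc : (t₀.map (clp k)).Nodup := nodup_map_clp hnd₀ hmemne
        have htsc : (t₀.map (clp k)).toFinset = Finset.range n := toFinset_map_clp hk' hts₀
        have havc : ¬ Ctn R123 (t₀.map (clp k)) := by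
          intro h
          apply hav₀
          rw [← Ctn_map_iff (f := clp k) (l := t₀) ?_]
          · exact h
          · intro a b c hs
            have ha := hmemne a (hs.mem (by simp))
            have hb := hmemne b (hs.mem (by simp))
            have hc := hmemne c (hs.mem (by simp))
            unfold R123
            rw [clp_lt_iff ha hb, clp_lt_iff hb hc]
        have hmc : mSt B123 (t₀.map (clp k)) ≤ k := by
          apply mSt_le
          intro y hy
          obtain ⟨c, hs, hyc⟩ := hy
          obtain ⟨x', c', hs', rfl, rfl⟩ := pair_sublist_map.mp hs
          have hc' := hmemne c' (hs'.mem (by simp))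
          have hx' := hmemne x' (hs'.mem (by simp))
          have h1 : x' < c' := (clp_lt_iff hx' hc').mp hyc
          have h2 : x' < k := hvalid x' ⟨c', hs', h1⟩
          unfold clp; split_ifs <;> omega
        have hAPc : AP R123 n (t₀.map (clp k)) := ⟨hndc, htsc, havc⟩
        have hmkt : mSt B123 (k :: t₀) = k + 1 := by
          have := aux123_inl hklt hAPc hmc
          rw [map_unc_map_clp hmemne] at this
          exact this.2
        have hkj : k = j - 1 := by rw [hmkt] at hm; omega
        refine ⟨Sum.inl ⟨t₀.map (clp k), hAPc, by rw [← hkj]; exact hmc⟩, ?_⟩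
        apply Subtype.ext
        show (j-1) :: ((t₀.map (clp k)).map (unc (j-1))) = k :: t₀
        rw [← hkj, map_unc_map_clp hmemne]

lemma Fc123_rec_zero {n : ℕ} :
    Fc R123 B123 (n+1) 0 = Fc R123 B123 n 0 := by
  unfold Fc
  apply Nat.card_congr
  apply Equiv.symm
  refine Equiv.ofBijective (fun t => ⟨n :: t.val, (aux123_inr t.prop.1).1,
      by rw [(aux123_inr t.prop.1).2]; exact t.prop.2⟩) ⟨?_, ?_⟩
  · rintro ⟨t, ht⟩ ⟨t', ht'⟩ h
    simp only [Subtype.mk.injEq, List.cons.injEq, true_and] at h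
    exact Subtype.ext h
  · rintro ⟨l, ⟨hnd, hts, hav⟩, hm⟩
    cases l with
    | nil => exfalso; simp at hts; exact absurd hts.symm (Finset.nonempty_range_add_one.ne_empty)
    | cons k t₀ =>
      obtain ⟨hk', hnd₀, hts₀⟩ := AP_cons_nodup_toFinset.mp ⟨hnd, hts⟩
      have hmemne : ∀ x ∈ t₀, x ≠ k := by
        intro x hx
        have : x ∈ (Finset.range (n+1)).erase k := hts₀ ▸ List.mem_toFinset.mpr hx
        exact (Finset.mem_erase.mp this).1
      rw [Ctn_cons_123] at hav
      push_neg at hav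
      obtain ⟨hav₀, hval⟩ := hav
      have hvalid : ∀ x, B123 t₀ x → x < k := by
        intro x hx
        have h1 := hval x hx
        have h2 := hmemne x (B123_mem hx).1
        omega
      by_cases hkn : k = n
      · rw [hkn] at hts₀ hm
        have hts₀' : t₀.toFinset = Finset.range n := by
          rw [hts₀, Finset.range_add_one, Finset.erase_insert (by simp)]
        have hAPt : AP R123 n t₀ := ⟨hnd₀, hts₀', hav₀⟩
        have hmt : mSt B123 t₀ = 0 := by
          rw [← (aux123_inr hAPt).2]; exact hm
        exact ⟨⟨t₀, hAPt, hmt⟩, Subtype.ext (show n :: t₀ = k :: t₀ by rw [hkn])⟩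
      · exfalso
        have hklt : k < n := by omega
        have hndc : (t₀.map (clp k)).Nodup := nodup_map_clp hnd₀ hmemne
        have htsc : (t₀.map (clp k)).toFinset = Finset.range n := toFinset_map_clp hk' hts₀
        have havc : ¬ Ctn R123 (t₀.map (clp k)) := by
          intro h
          apply hav₀
          rw [← Ctn_map_iff (f := clp k) (l := t₀) ?_]
          · exact h
          · intro a b c hs
            have ha := hmemne a (hs.mem (by simp))
            have hb := hmemne b (hs.mem (by simp))
            have hc := hmemne c (hs.mem (by simp))
            unfold R123
            rw [clp_lt_iff ha hb, clp_lt_iff hb hc]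
        have hmc : mSt B123 (t₀.map (clp k)) ≤ k := by
          apply mSt_le
          intro y hy
          obtain ⟨c, hs, hyc⟩ := hy
          obtain ⟨x', c', hs', rfl, rfl⟩ := pair_sublist_map.mp hs
          have hc' := hmemne c' (hs'.mem (by simp))
          have hx' := hmemne x' (hs'.mem (by simp))
          have h1 : x' < c' := (clp_lt_iff hx' hc').mp hyc
          have h2 : x' < k := hvalid x' ⟨c', hs', h1⟩
          unfold clp; split_ifs <;> omega
        have hAPc : AP R123 n (t₀.map (clp k)) := ⟨hndc, htsc, havc⟩
        have hmkt : mSt B123 (k :: t₀) = k + 1 := by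
          have := aux123_inl hklt hAPc hmc
          rw [map_unc_map_clp hmemne] at this
          exact this.2
        rw [hmkt] at hm
        omega


/-! ### assembling the recurrence -/

lemma card_le_split {R : ℕ → ℕ → ℕ → Prop} {B : List ℕ → ℕ → Prop} {n x : ℕ} :
    Nat.card {t : List ℕ // AP R n t ∧ mSt B t ≤ x} =
      ∑ i ∈ Finset.range (x+1), Fc R B n i := by
  rw [card_split (fun l => AP R n l ∧ mSt B l ≤ x) (mSt B) x
      (fun l h => ⟨h.1.1, h.1.2.1⟩) (fun l h => h.2)]
  refine Finset.sum_congr rfl fun i hi => Nat.card_congr ?_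
  have hi' : i ≤ x := by have := Finset.mem_range.mp hi; omega
  exact Equiv.subtypeEquivRight (fun l => by
    constructor
    · rintro ⟨⟨h1, -⟩, h3⟩; exact ⟨h1, h3⟩
    · rintro ⟨h1, h3⟩; exact ⟨⟨h1, h3 ▸ hi'⟩, h3⟩)

lemma Fc132_rec' {n j : ℕ} (hj : j ≤ n) :
    Fc R132 B132 (n+1) j = ∑ i ∈ Finset.range (j+1), Fc R132 B132 n i := by
  rw [Fc132_rec hj, card_le_split]

lemma Fc123_rec' {n j : ℕ} (hj : j ≤ n) :
    Fc R123 B123 (n+1) j = ∑ i ∈ Finset.range (j+1), Fc R123 B123 n i := by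
  rcases Nat.eq_zero_or_pos j with rfl | hj1
  · rw [Fc123_rec_zero]; simp
  · rw [Fc123_rec_pos hj1 hj, card_le_split]
    have : j - 1 + 1 = j := by omega
    rw [this, Finset.sum_range_succ]

/-! ### base case -/

lemma Ctn_nil (R : ℕ → ℕ → ℕ → Prop) : ¬ Ctn R [] := by
  rintro ⟨a, b, c, hs, -⟩
  simpa using List.sublist_nil.mp hs

lemma AP_zero_iff {R : ℕ → ℕ → ℕ → Prop} {l : List ℕ} : AP R 0 l ↔ l = [] := by
  constructor
  · rintro ⟨hnd, hts, -⟩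
    rw [Finset.range_zero] at hts
    exact (List.toFinset_eq_empty_iff l).mp hts
  · rintro rfl
    exact ⟨List.nodup_nil, by simp, Ctn_nil R⟩

lemma Fc_base {R : ℕ → ℕ → ℕ → Prop} {B : List ℕ → ℕ → Prop}
    (hnil : ∀ x, ¬ B [] x) (j : ℕ) :
    Fc R B 0 j = if j = 0 then 1 else 0 := by
  unfold Fc
  split_ifs with hjz
  · subst hjz
    have e : {l : List ℕ // (AP R 0 l ∧ mSt B l = 0)} ≃ Unit := by
      refine Equiv.symm (Equiv.ofBijective
        (fun _ => ⟨[], AP_zero_iff.mpr rfl, mSt_nil B hnil⟩) ⟨?_, ?_⟩)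
      · intro a b _; rfl
      · rintro ⟨l, hap, hm⟩
        exact ⟨Unit.unit, Subtype.ext (AP_zero_iff.mp hap).symm⟩
    rw [Nat.card_congr e]
    simp
  · rw [Nat.card_eq_zero]
    left
    constructor
    rintro ⟨l, hap, hm⟩
    rw [AP_zero_iff.mp hap] at hm
    rw [mSt_nil B hnil] at hm
    exact hjz hm.symm

/-! ### the numerical sequence -/

def u : ℕ → ℕ → ℕ
  | 0, j => if j = 0 then 1 else 0
  | n+1, j => if j ≤ n then ∑ i ∈ Finset.range (j+1), u n i else 0

lemma u_zero (j : ℕ) : u 0 j = if j = 0 then 1 else 0 := rfl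
lemma u_succ (n j : ℕ) : u (n+1) j = if j ≤ n then ∑ i ∈ Finset.range (j+1), u n i else 0 := rfl

lemma Fc_eq_u (R : ℕ → ℕ → ℕ → Prop) (B : List ℕ → ℕ → Prop)
    (hnil : ∀ x, ¬ B [] x)
    (hrec : ∀ n j, j ≤ n → Fc R B (n+1) j = ∑ i ∈ Finset.range (j+1), Fc R B n i)
    (hzero : ∀ n j, n < j → Fc R B (n+1) j = 0) :
    ∀ n j, Fc R B n j = u n j := by
  intro n
  induction n with
  | zero => intro j; rw [Fc_base hnil, u_zero]
  | succ n IH =>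
    intro j
    rw [u_succ]
    split_ifs with hj
    · rw [hrec n j hj]
      exact Finset.sum_congr rfl fun i _ => IH i
    · exact hzero n j (by omega)

lemma Fc132_eq_u : ∀ n j, Fc R132 B132 n j = u n j :=
  Fc_eq_u _ _ B132_nil (fun _ _ h => Fc132_rec' h) (fun _ _ h => Fc132_zero h)

lemma Fc123_eq_u : ∀ n j, Fc R123 B123 n j = u n j :=
  Fc_eq_u _ _ B123_nil (fun _ _ h => Fc123_rec' h) (fun _ _ h => Fc123_zero h)

lemma Nc_eq_sum_u (R : ℕ → ℕ → ℕ → Prop) (B : List ℕ → ℕ → Prop)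
    (hb : ∀ n (l : List ℕ), l.toFinset = Finset.range n → mSt B l ≤ n)
    (hFu : ∀ n j, Fc R B n j = u n j) (n : ℕ) :
    Nc R n = ∑ j ∈ Finset.range (n+1), u n j := by
  unfold Nc
  rw [card_split (AP R n) (mSt B) n (fun l h => ⟨h.1, h.2.1⟩)
      (fun l h => hb n l h.2.1)]
  exact Finset.sum_congr rfl fun j _ => hFu n j

/-! ### triangle sum swap -/

lemma tri_swap (f : ℕ → ℕ → ℕ) (J : ℕ) :
    ∑ i ∈ Finset.range (J+1), ∑ a ∈ Finset.range (i+1), f a i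
      = ∑ a ∈ Finset.range (J+1), ∑ i ∈ Finset.Ico a (J+1), f a i := by
  induction J with
  | zero => simp
  | succ J IH =>
    have h1 : ∀ a ∈ Finset.range (J+1),
        ∑ i ∈ Finset.Ico a (J+2), f a i
          = (∑ i ∈ Finset.Ico a (J+1), f a i) + f a (J+1) := by
      intro a ha
      exact Finset.sum_Ico_succ_top (by have := Finset.mem_range.mp ha; omega) _
    have h2 : ∑ i ∈ Finset.Ico (J+1) (J+2), f (J+1) i = f (J+1) (J+1) := by
      rw [Finset.sum_Ico_succ_top (le_refl _)]
      simp
    have hRHS : ∑ a ∈ Finset.range (J+2), ∑ i ∈ Finset.Ico a (J+2), f a i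
        = (∑ a ∈ Finset.range (J+1), ∑ i ∈ Finset.Ico a (J+1), f a i)
          + ∑ a ∈ Finset.range (J+2), f a (J+1) := by
      rw [Finset.sum_range_succ, Finset.sum_congr rfl h1, Finset.sum_add_distrib, h2,
        Finset.sum_range_succ (f := fun a => f a (J+1)) (n := J+1), add_assoc]
    rw [Finset.sum_range_succ, IH, hRHS]

/-! ### the main catalan computation -/

lemma u_top_zero (m j : ℕ) (h : m < j) : u (m+1) j = 0 := by
  rw [u_succ, if_neg (by omega)]

lemma main_catalan : ∀ n : ℕ,
    (∀ j, j ≤ n → u (n+1) j = ∑ a ∈ Finset.range (j+1), catalan a * u (n-a) (j-a)) ∧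
      (∑ j ∈ Finset.range (n+1), u n j = catalan n) := by
  intro n
  induction n using Nat.strong_induction_on with
  | _ n IH =>
    have hP : ∑ j ∈ Finset.range (n+1), u n j = catalan n := by
      cases n with
      | zero => simp [u_zero]
      | succ m =>
        have hQm := (IH m (by omega)).1
        rw [Finset.sum_range_succ, u_top_zero m (m+1) (by omega), add_zero]
        rw [Finset.sum_congr rfl (fun j hj => hQm j (by
          have := Finset.mem_range.mp hj; omega))]
        rw [tri_swap (fun a i => catalan a * u (m-a) (i-a)) m]
        rw [catalan_succ]
        rw [Fin.sum_univ_eq_sum_range (fun i => catalan i * catalan (m - i)) (m+1)]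
        refine Finset.sum_congr rfl fun a ha => ?_
        have haa : a ≤ m := by have := Finset.mem_range.mp ha; omega
        rw [Finset.sum_Ico_eq_sum_range]
        have hsimp : ∀ i, catalan a * u (m-a) (a+i-a) = catalan a * u (m-a) i :=
          fun i => by rw [show a+i-a = i from by omega]
        have h1 : m + 1 - a = (m - a) + 1 := by omega
        rw [Finset.sum_congr rfl (fun i _ => hsimp i), ← Finset.mul_sum, h1]
        rw [(IH (m - a) (by omega)).2]
    refine ⟨?_, hP⟩
    intro j hj
    cases n with
    | zero =>
      interval_cases j
      simp [u_succ, u_zero]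
    | succ m =>
      have hQm := (IH m (by omega)).1
      rw [u_succ, if_pos hj]
      rcases Nat.lt_or_ge j (m+1) with hjm | hjm
      · -- j ≤ m
        have hjm' : j ≤ m := by omega
        rw [Finset.sum_congr rfl (fun i hi => hQm i (by
          have := Finset.mem_range.mp hi; omega))]
        rw [tri_swap (fun a i => catalan a * u (m-a) (i-a)) j]
        refine Finset.sum_congr rfl fun a ha => ?_
        have haj : a ≤ j := by have := Finset.mem_range.mp ha; omega
        rw [Finset.sum_Ico_eq_sum_range]
        have hsimp : ∀ i, catalan a * u (m-a) (a+i-a) = catalan a * u (m-a) i :=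
          fun i => by rw [show a+i-a = i from by omega]
        have h2 : j + 1 - a = (j - a) + 1 := by omega
        rw [Finset.sum_congr rfl (fun i _ => hsimp i), ← Finset.mul_sum, h2]
        have h3 : m + 1 - a = (m - a) + 1 := by omega
        rw [h3, u_succ, if_pos (by omega)]
      · -- j = m + 1
        have hje : j = m + 1 := by omega
        subst hje
        rw [hP]
        rw [Finset.sum_range_succ]
        have hlast : catalan (m+1) * u (m+1-(m+1)) (m+1-(m+1)) = catalan (m+1) := by
          simp [u_zero]
        rw [hlast]
        have hzero : ∀ a ∈ Finset.range (m+1),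
            catalan a * u (m+1-a) (m+1-a) = 0 := by
          intro a ha
          have haa : a ≤ m := by have := Finset.mem_range.mp ha; omega
          have h1 : m + 1 - a = (m - a) + 1 := by omega
          rw [h1, u_top_zero (m-a) ((m-a)+1) (by omega), mul_zero]
        rw [Finset.sum_eq_zero hzero, zero_add]

lemma Nc132_eq_catalan (n : ℕ) : Nc R132 n = catalan n := by
  rw [Nc_eq_sum_u R132 B132 (fun n l h => mSt132_le h) Fc132_eq_u n]
  exact (main_catalan n).2

lemma Nc123_eq_catalan (n : ℕ) : Nc R123 n = catalan n := by
  rw [Nc_eq_sum_u R123 B123 (fun n l h => mSt123_le h) Fc123_eq_u n]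
  exact (main_catalan n).2


/-! ### symmetries -/

lemma Ctn_congr {R R' : ℕ → ℕ → ℕ → Prop} {l : List ℕ}
    (h : ∀ a b c, R a b c ↔ R' a b c) : Ctn R l ↔ Ctn R' l := by
  unfold Ctn
  constructor <;> rintro ⟨a, b, c, hs, hR⟩ <;> exact ⟨a, b, c, hs, by
    first
    | exact (h a b c).mp hR
    | exact (h a b c).mpr hR⟩

lemma Ctn_reverse {R : ℕ → ℕ → ℕ → Prop} {l : List ℕ} :
    Ctn R l.reverse ↔ Ctn (fun a b c => R c b a) l := by
  constructor
  · rintro ⟨a, b, c, hs, hR⟩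
    refine ⟨c, b, a, ?_, hR⟩
    have : [a,b,c] = [c,b,a].reverse := by simp
    rw [this] at hs
    exact List.reverse_sublist.mp hs
  · rintro ⟨a, b, c, hs, hR⟩
    refine ⟨c, b, a, ?_, hR⟩
    have : [c,b,a] = [a,b,c].reverse := by simp
    rw [this]
    exact List.reverse_sublist.mpr hs

lemma Nc_congr {R R' : ℕ → ℕ → ℕ → Prop} {n : ℕ} (Φ : List ℕ → List ℕ)
    (h1 : ∀ l, AP R n l → AP R' n (Φ l))
    (h2 : ∀ l, AP R' n l → AP R n (Φ l))
    (h3 : ∀ l, AP R n l → Φ (Φ l) = l)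
    (h4 : ∀ l, AP R' n l → Φ (Φ l) = l) : Nc R n = Nc R' n :=
  Nat.card_congr ⟨fun x => ⟨Φ x.1, h1 _ x.2⟩, fun x => ⟨Φ x.1, h2 _ x.2⟩,
    fun x => Subtype.ext (h3 _ x.2), fun x => Subtype.ext (h4 _ x.2)⟩

lemma Nc_rev (R : ℕ → ℕ → ℕ → Prop) (n : ℕ) :
    Nc R n = Nc (fun a b c => R c b a) n := by
  refine Nc_congr List.reverse ?_ ?_ (fun l _ => List.reverse_reverse l)
    (fun l _ => List.reverse_reverse l)
  · rintro l ⟨hnd, hts, hav⟩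
    refine ⟨List.nodup_reverse.mpr hnd, by rwa [List.toFinset_reverse], ?_⟩
    intro hc
    exact hav (Ctn_reverse.mp hc)
  · rintro l ⟨hnd, hts, hav⟩
    refine ⟨List.nodup_reverse.mpr hnd, by rwa [List.toFinset_reverse], ?_⟩
    intro hc
    exact hav (Ctn_reverse.mp hc)

def cpl (n x : ℕ) : ℕ := n - 1 - x

lemma Ctn_map_iff' {R R' : ℕ → ℕ → ℕ → Prop} {f : ℕ → ℕ} {l : List ℕ}
    (hf : ∀ a b c, [a,b,c].Sublist l → (R (f a) (f b) (f c) ↔ R' a b c)) :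
    Ctn R (l.map f) ↔ Ctn R' l := by
  constructor
  · rintro ⟨a, b, c, hs, hR⟩
    obtain ⟨a', b', c', hs', rfl, rfl, rfl⟩ := triple_sublist_map.mp hs
    exact ⟨a', b', c', hs', (hf _ _ _ hs').mp hR⟩
  · rintro ⟨a, b, c, hs, hR⟩
    exact ⟨f a, f b, f c, by simpa using hs.map f, (hf _ _ _ hs).mpr hR⟩

lemma Nc_cpl {R R' : ℕ → ℕ → ℕ → Prop} {n : ℕ}
    (hcomp : ∀ a b c, a < n → b < n → c < n → (R (cpl n a) (cpl n b) (cpl n c) ↔ R' a b c))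
    (hcomp' : ∀ a b c, a < n → b < n → c < n → (R' (cpl n a) (cpl n b) (cpl n c) ↔ R a b c)) :
    Nc R' n = Nc R n := by
  have hmemlt : ∀ (l : List ℕ), l.toFinset = Finset.range n → ∀ x ∈ l, x < n := by
    intro l hts x hx
    exact Finset.mem_range.mp (hts ▸ List.mem_toFinset.mpr hx)
  have hAP : ∀ (S S' : ℕ → ℕ → ℕ → Prop),
      (∀ a b c, a < n → b < n → c < n → (S (cpl n a) (cpl n b) (cpl n c) ↔ S' a b c)) →
      ∀ l, AP S' n l → AP S n (l.map (cpl n)) := by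
    rintro S S' hc l ⟨hnd, hts, hav⟩
    have hlt := hmemlt l hts
    refine ⟨hnd.map_on ?_, ?_, ?_⟩
    · intro x hx y hy hxy
      have := hlt x hx; have := hlt y hy
      unfold cpl at hxy; omega
    · ext y
      simp only [List.mem_toFinset, List.mem_map, Finset.mem_range]
      constructor
      · rintro ⟨x, hx, rfl⟩
        have := hlt x hx
        unfold cpl; omega
      · intro hy
        refine ⟨cpl n y, ?_, by unfold cpl; omega⟩
        rw [← List.mem_toFinset, hts, Finset.mem_range]
        unfold cpl; omega
    · intro hc'
      apply hav
      rw [Ctn_map_iff' (R' := S') ?_] at hc'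
      · exact hc'
      · intro a b c hs
        exact hc a b c (hlt _ (hs.mem (by simp))) (hlt _ (hs.mem (by simp)))
          (hlt _ (hs.mem (by simp)))
  have hinv : ∀ (l : List ℕ), l.toFinset = Finset.range n → (l.map (cpl n)).map (cpl n) = l := by
    intro l hts
    have hlt := hmemlt l hts
    rw [List.map_map]
    have : ∀ a ∈ l, (cpl n ∘ cpl n) a = id a := by
      intro a ha
      have := hlt a ha
      show cpl n (cpl n a) = a
      unfold cpl; omega
    rw [List.map_congr_left this, List.map_id]
  exact Nc_congr (fun l => l.map (cpl n)) (hAP R R' hcomp) (hAP R' R hcomp')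
    (fun l h => hinv l h.2.1) (fun l h => hinv l h.2.1)

lemma Nc231 (n : ℕ) : Nc R231 n = catalan n := by
  rw [Nc_rev, show (fun a b c => R231 c b a) = R132 from rfl, Nc132_eq_catalan]

lemma Nc321 (n : ℕ) : Nc R321 n = catalan n := by
  rw [Nc_rev, show (fun a b c => R321 c b a) = R123 from rfl, Nc123_eq_catalan]

lemma Nc312 (n : ℕ) : Nc R312 n = catalan n := by
  rw [← Nc132_eq_catalan n]
  apply Nc_cpl (R := R132)
  · intro a b c ha hb hc
    unfold R132 R312 cpl
    omega
  · intro a b c ha hb hc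
    unfold R132 R312 cpl
    omega

lemma Nc213 (n : ℕ) : Nc R213 n = catalan n := by
  rw [Nc_rev, show (fun a b c => R213 c b a) = R312 from rfl, Nc312]

/-! ### bridge to the Fin model -/

def L {n : ℕ} (g : Fin n → Fin n) : List ℕ := List.ofFn (fun i => (g i : ℕ))

lemma length_L {n : ℕ} (g : Fin n → Fin n) : (L g).length = n := by simp [L]

def tri {n : ℕ} (i j k : Fin n) : Fin 3 → Fin n
  | ⟨0, _⟩ => i
  | ⟨1, _⟩ => j
  | ⟨2, _⟩ => k

lemma tri_mono {n : ℕ} {i j k : Fin n} (h1 : i < j) (h2 : j < k) :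
    StrictMono (tri i j k) := by
  intro a b hab
  match a, b with
  | ⟨0,_⟩, ⟨0,_⟩ => exact absurd hab (by simp [Fin.lt_def])
  | ⟨0,_⟩, ⟨1,_⟩ => exact h1
  | ⟨0,_⟩, ⟨2,_⟩ => exact lt_trans h1 h2
  | ⟨1,_⟩, ⟨0,_⟩ => exact absurd hab (by simp [Fin.lt_def])
  | ⟨1,_⟩, ⟨1,_⟩ => exact absurd hab (by simp [Fin.lt_def])
  | ⟨1,_⟩, ⟨2,_⟩ => exact h2
  | ⟨2,_⟩, ⟨0,_⟩ => exact absurd hab (by simp [Fin.lt_def])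
  | ⟨2,_⟩, ⟨1,_⟩ => exact absurd hab (by simp [Fin.lt_def])
  | ⟨2,_⟩, ⟨2,_⟩ => exact absurd hab (by simp [Fin.lt_def])

lemma triple_sublist_ofFn {n : ℕ} {g : Fin n → Fin n} {x y z : ℕ} :
    [x,y,z].Sublist (L g) ↔
      ∃ i j k : Fin n, i < j ∧ j < k ∧ (g i : ℕ) = x ∧ (g j : ℕ) = y ∧ (g k : ℕ) = z := by
  rw [List.sublist_iff_exists_fin_orderEmbedding_get_eq]
  have hlen : (L g).length = n := length_L g
  have hget : ∀ w : Fin (L g).length, (L g).get w = (g (Fin.cast hlen w) : ℕ) := by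
    intro w
    exact List.get_ofFn (fun i => (g i : ℕ)) w
  constructor
  · rintro ⟨f, hf⟩
    set i0 : Fin ([x,y,z].length) := ⟨0, by norm_num⟩ with hi0
    set i1 : Fin ([x,y,z].length) := ⟨1, by norm_num⟩ with hi1
    set i2 : Fin ([x,y,z].length) := ⟨2, by norm_num⟩ with hi2
    have h01 : f i0 < f i1 := f.strictMono (by simp [hi0, hi1, Fin.lt_def])
    have h12 : f i1 < f i2 := f.strictMono (by simp [hi1, hi2, Fin.lt_def])
    refine ⟨Fin.cast hlen (f i0), Fin.cast hlen (f i1), Fin.cast hlen (f i2),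
      h01, h12, ?_, ?_, ?_⟩
    · have := hf i0
      rw [hget] at this
      exact this.symm
    · have := hf i1
      rw [hget] at this
      exact this.symm
    · have := hf i2
      rw [hget] at this
      exact this.symm
  · rintro ⟨i, j, k, hij, hjk, hx, hy, hz⟩
    refine ⟨OrderEmbedding.ofStrictMono
      (fun t => Fin.cast hlen.symm (tri i j k (Fin.cast (by norm_num) t))) ?_, ?_⟩
    · intro a b hab
      show (tri i j k (Fin.cast (by norm_num) a)).val
          < (tri i j k (Fin.cast (by norm_num) b)).val
      exact tri_mono hij hjk hab
    · intro ix
      rw [hget]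
      match ix with
      | ⟨0, _⟩ => exact hx.symm
      | ⟨1, _⟩ => exact hy.symm
      | ⟨2, _⟩ => exact hz.symm

lemma lt_flip {α β : Type*} [LinearOrder α] [LinearOrder β] {a b : α} {c d : β}
    (h : a < b ↔ c < d) (hab : a ≠ b) (hcd : c ≠ d) : b < a ↔ d < c := by
  constructor
  · intro hba
    rcases lt_trichotomy c d with h2 | h2 | h2
    · exact absurd (h.mpr h2) (lt_asymm hba)
    · exact absurd h2 hcd
    · exact h2
  · intro hdc
    rcases lt_trichotomy a b with h2 | h2 | h2
    · exact absurd (h.mp h2) (lt_asymm hdc)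
    · exact absurd h2 hab
    · exact h2

lemma ctn_iff (τ : Fin 3 → Fin 3) (R : ℕ → ℕ → ℕ → Prop) (hτ : Function.Injective τ)
    (hmatch : ∀ u v w : ℕ, u ≠ v → u ≠ w → v ≠ w →
      (R u v w ↔ ((τ 0 < τ 1 ↔ u < v) ∧ (τ 0 < τ 2 ↔ u < w) ∧ (τ 1 < τ 2 ↔ v < w))))
    {n : ℕ} {g : Fin n → Fin n} (hg : Function.Injective g) :
    Ctn R (L g) ↔ ∃ f, IsOcc τ g f := by
  constructor
  · rintro ⟨x, y, z, hs, hR⟩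
    obtain ⟨i, j, k, hij, hjk, rfl, rfl, rfl⟩ := triple_sublist_ofFn.mp hs
    have hijne : i ≠ j := ne_of_lt hij
    have hjkne : j ≠ k := ne_of_lt hjk
    have hikne : i ≠ k := ne_of_lt (lt_trans hij hjk)
    have hne1 : (g i : ℕ) ≠ (g j : ℕ) := fun h => hijne (hg (Fin.ext h))
    have hne2 : (g i : ℕ) ≠ (g k : ℕ) := fun h => hikne (hg (Fin.ext h))
    have hne3 : (g j : ℕ) ≠ (g k : ℕ) := fun h => hjkne (hg (Fin.ext h))
    obtain ⟨e1, e2, e3⟩ := (hmatch _ _ _ hne1 hne2 hne3).mp hR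
    have f1 : τ 0 < τ 1 ↔ g i < g j := e1.trans Fin.lt_def.symm
    have f2 : τ 0 < τ 2 ↔ g i < g k := e2.trans Fin.lt_def.symm
    have f3 : τ 1 < τ 2 ↔ g j < g k := e3.trans Fin.lt_def.symm
    have gne1 : g i ≠ g j := fun h => hijne (hg h)
    have gne2 : g i ≠ g k := fun h => hikne (hg h)
    have gne3 : g j ≠ g k := fun h => hjkne (hg h)
    have t01 : τ 0 ≠ τ 1 := fun h => absurd (hτ h) (by decide)
    have t02 : τ 0 ≠ τ 2 := fun h => absurd (hτ h) (by decide)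
    have t12 : τ 1 ≠ τ 2 := fun h => absurd (hτ h) (by decide)
    refine ⟨tri i j k, tri_mono hij hjk, ?_⟩
    · intro a b
      match a, b with
      | ⟨0,_⟩, ⟨0,_⟩ => exact iff_of_false (lt_irrefl _) (lt_irrefl _)
      | ⟨0,_⟩, ⟨1,_⟩ => exact f1
      | ⟨0,_⟩, ⟨2,_⟩ => exact f2
      | ⟨1,_⟩, ⟨0,_⟩ => exact lt_flip f1 t01 gne1
      | ⟨1,_⟩, ⟨1,_⟩ => exact iff_of_false (lt_irrefl _) (lt_irrefl _)
      | ⟨1,_⟩, ⟨2,_⟩ => exact f3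
      | ⟨2,_⟩, ⟨0,_⟩ => exact lt_flip f2 t02 gne2
      | ⟨2,_⟩, ⟨1,_⟩ => exact lt_flip f3 t12 gne3
      | ⟨2,_⟩, ⟨2,_⟩ => exact iff_of_false (lt_irrefl _) (lt_irrefl _)
  · rintro ⟨f, hmono, hiff⟩
    have hfne : ∀ (a b : Fin 3), a ≠ b → (g (f a) : ℕ) ≠ (g (f b) : ℕ) :=
      fun a b hab h => hab (hmono.injective (hg (Fin.ext h)))
    refine ⟨(g (f 0) : ℕ), (g (f 1) : ℕ), (g (f 2) : ℕ),
      triple_sublist_ofFn.mpr ⟨f 0, f 1, f 2, hmono (by decide), hmono (by decide),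
        rfl, rfl, rfl⟩, ?_⟩
    refine (hmatch _ _ _ (hfne 0 1 (by decide)) (hfne 0 2 (by decide))
      (hfne 1 2 (by decide))).mpr ?_
    exact ⟨(hiff 0 1).trans Fin.lt_def, (hiff 0 2).trans Fin.lt_def,
      (hiff 1 2).trans Fin.lt_def⟩

lemma model_card (τ : Fin 3 → Fin 3) (R : ℕ → ℕ → ℕ → Prop) (hτ : Function.Injective τ)
    (hmatch : ∀ u v w : ℕ, u ≠ v → u ≠ w → v ≠ w →
      (R u v w ↔ ((τ 0 < τ 1 ↔ u < v) ∧ (τ 0 < τ 2 ↔ u < w) ∧ (τ 1 < τ 2 ↔ v < w))))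
    (n : ℕ) :
    Nat.card {π : Fin n → Fin n // Function.Bijective π ∧ Avoids τ π} = Nc R n := by
  apply Nat.card_congr
  refine Equiv.ofBijective (fun π => ⟨L π.val, ?_, ?_, ?_⟩) ⟨?_, ?_⟩
  · exact List.nodup_ofFn.mpr (Fin.val_injective.comp π.prop.1.injective)
  · ext y
    simp only [L, List.mem_toFinset, List.mem_ofFn, Set.mem_range, Finset.mem_range]
    constructor
    · rintro ⟨i, rfl⟩
      exact (π.val i).isLt
    · intro hy
      obtain ⟨i, hi⟩ := π.prop.1.surjective ⟨y, hy⟩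
      exact ⟨i, by rw [hi]⟩
  · intro hc
    exact π.prop.2 ((ctn_iff τ R hτ hmatch π.prop.1.injective).mp hc)
  · rintro ⟨g, hg⟩ ⟨g', hg'⟩ h
    simp only [Subtype.mk.injEq] at h
    apply Subtype.ext
    have := List.ofFn_inj.mp (congrArg Subtype.val h)
    funext i
    exact Fin.ext (congrFun this i)
  · rintro ⟨l, hnd, hts, hav⟩
    have hlen : l.length = n := by
      rw [← List.toFinset_card_of_nodup hnd, hts, Finset.card_range]
    have hmem : ∀ i : Fin l.length, l.get i < n := by
      intro i
      have hmm : l.get i ∈ l := List.get_mem l i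
      exact Finset.mem_range.mp (hts ▸ List.mem_toFinset.mpr hmm)
    set π : Fin n → Fin n := fun i => ⟨l.get (Fin.cast hlen.symm i), hmem _⟩ with hπ
    have hL : L π = l := by
      apply List.ext_get (by simp [L, hlen])
      intro idx h1 h2
      simp only [L, List.get_ofFn, hπ]
      rfl
    have hinj : Function.Injective π := by
      intro a b hab
      have h1 : l.get (Fin.cast hlen.symm a) = l.get (Fin.cast hlen.symm b) :=
        congrArg Fin.val hab
      have h2 := List.nodup_iff_injective_get.mp hnd h1
      have h3 := congrArg Fin.val h2
      exact Fin.ext h3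
    have hbij : Function.Bijective π := Finite.injective_iff_bijective.mp hinj
    refine ⟨⟨π, hbij, ?_⟩, Subtype.ext hL⟩
    intro hocc
    apply hav
    have := (ctn_iff τ R hτ hmatch hinj).mpr hocc
    rwa [hL] at this

/-! ### matching lemmas for the six patterns -/

lemma match123 : ∀ u v w : ℕ, u ≠ v → u ≠ w → v ≠ w →
    (R123 u v w ↔ ((p123 0 < p123 1 ↔ u < v) ∧ (p123 0 < p123 2 ↔ u < w) ∧
      (p123 1 < p123 2 ↔ v < w))) := by
  intro u v w h1 h2 h3
  have e1 : p123 0 < p123 1 := by decide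
  have e2 : p123 0 < p123 2 := by decide
  have e3 : p123 1 < p123 2 := by decide
  unfold R123
  simp only [iff_true_intro e1, iff_true_intro e2, iff_true_intro e3, true_iff]
  omega

lemma match132 : ∀ u v w : ℕ, u ≠ v → u ≠ w → v ≠ w →
    (R132 u v w ↔ ((p132 0 < p132 1 ↔ u < v) ∧ (p132 0 < p132 2 ↔ u < w) ∧
      (p132 1 < p132 2 ↔ v < w))) := by
  intro u v w h1 h2 h3
  have e1 : p132 0 < p132 1 := by decide
  have e2 : p132 0 < p132 2 := by decide
  have e3 : ¬ p132 1 < p132 2 := by decide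
  unfold R132
  simp only [iff_true_intro e1, iff_true_intro e2, iff_false_intro e3, true_iff, false_iff]
  omega

lemma match213 : ∀ u v w : ℕ, u ≠ v → u ≠ w → v ≠ w →
    (R213 u v w ↔ ((p213 0 < p213 1 ↔ u < v) ∧ (p213 0 < p213 2 ↔ u < w) ∧
      (p213 1 < p213 2 ↔ v < w))) := by
  intro u v w h1 h2 h3
  have e1 : ¬ p213 0 < p213 1 := by decide
  have e2 : p213 0 < p213 2 := by decide
  have e3 : p213 1 < p213 2 := by decide
  unfold R213
  simp only [iff_true_intro e2, iff_true_intro e3, iff_false_intro e1, true_iff, false_iff]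
  omega

lemma match231 : ∀ u v w : ℕ, u ≠ v → u ≠ w → v ≠ w →
    (R231 u v w ↔ ((p231 0 < p231 1 ↔ u < v) ∧ (p231 0 < p231 2 ↔ u < w) ∧
      (p231 1 < p231 2 ↔ v < w))) := by
  intro u v w h1 h2 h3
  have e1 : p231 0 < p231 1 := by decide
  have e2 : ¬ p231 0 < p231 2 := by decide
  have e3 : ¬ p231 1 < p231 2 := by decide
  unfold R231
  simp only [iff_true_intro e1, iff_false_intro e2, iff_false_intro e3, true_iff, false_iff]
  omega

lemma match312 : ∀ u v w : ℕ, u ≠ v → u ≠ w → v ≠ w →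
    (R312 u v w ↔ ((p312 0 < p312 1 ↔ u < v) ∧ (p312 0 < p312 2 ↔ u < w) ∧
      (p312 1 < p312 2 ↔ v < w))) := by
  intro u v w h1 h2 h3
  have e1 : ¬ p312 0 < p312 1 := by decide
  have e2 : ¬ p312 0 < p312 2 := by decide
  have e3 : p312 1 < p312 2 := by decide
  unfold R312
  simp only [iff_true_intro e3, iff_false_intro e1, iff_false_intro e2, true_iff, false_iff]
  omega

lemma match321 : ∀ u v w : ℕ, u ≠ v → u ≠ w → v ≠ w →
    (R321 u v w ↔ ((p321 0 < p321 1 ↔ u < v) ∧ (p321 0 < p321 2 ↔ u < w) ∧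
      (p321 1 < p321 2 ↔ v < w))) := by
  intro u v w h1 h2 h3
  have e1 : ¬ p321 0 < p321 1 := by decide
  have e2 : ¬ p321 0 < p321 2 := by decide
  have e3 : ¬ p321 1 < p321 2 := by decide
  unfold R321
  simp only [iff_false_intro e1, iff_false_intro e2, iff_false_intro e3, false_iff]
  omega

lemma six_patterns (τ : Fin 3 → Fin 3) (hτ : Function.Bijective τ) :
    τ = p123 ∨ τ = p132 ∨ τ = p213 ∨ τ = p231 ∨ τ = p312 ∨ τ = p321 := by
  have h : ∀ σ : Fin 3 → Fin 3, Function.Bijective σ →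
      σ = p123 ∨ σ = p132 ∨ σ = p213 ∨ σ = p231 ∨ σ = p312 ∨ σ = p321 := by decide
  exact h τ hτ

end PatCat

/-- for every pattern `τ ∈ S₃`, the number of `τ`-avoiding permutations of
length `n` is the Catalan number `C(2n, n)/(n+1)`. -/
theorem stmt0 (τ : Fin 3 → Fin 3) (hτ : Function.Bijective τ) (n : ℕ) :
    Nat.card {π : Fin n → Fin n // Function.Bijective π ∧ Avoids τ π} =
      (2 * n).choose n / (n + 1) := by
  have hcb : (2 * n).choose n / (n + 1) = catalan n := by
    rw [catalan_eq_centralBinom_div, Nat.centralBinom]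
  rw [hcb]
  rcases PatCat.six_patterns τ hτ with rfl | rfl | rfl | rfl | rfl | rfl
  · rw [PatCat.model_card _ _ hτ.injective PatCat.match123, PatCat.Nc123_eq_catalan]
  · rw [PatCat.model_card _ _ hτ.injective PatCat.match132, PatCat.Nc132_eq_catalan]
  · rw [PatCat.model_card _ _ hτ.injective PatCat.match213, PatCat.Nc213]
  · rw [PatCat.model_card _ _ hτ.injective PatCat.match231, PatCat.Nc231]
  · rw [PatCat.model_card _ _ hτ.injective PatCat.match312, PatCat.Nc312]
  · rw [PatCat.model_card _ _ hτ.injective PatCat.match321, PatCat.Nc321]
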